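/- Let M be a finite MDP with alarm region and x_0 an initial state. For every history-dependent policy π̂ of the binary augmented MDP M̂ with initial state (x_0,0), there exists a history-dependent policy π of M with initial state x_0 such that the pushforward of the trajectory law P^π̂ under the projection ((x_0,y_0),…,(x_T,y_T), a_0,…,a_{T−1}) ↦ (x_0,…,x_T, a_0,…,a_{T−1}) equals the trajectory law P^π; equivalently, for every t ∈ {0,…,T} the joint distribution of (X_0,…,X_t, A_0,…,A_{min(t,T−1)}) under P^π equals that under P^π̂. -/

import Mathlib

/- Common framework: finite MDPs with alarm region, trajectories,
   history-dependent policies, trajectory laws, objectives. -/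

attribute [local instance] Classical.propDecidable

noncomputable section

/-- A finite MDP with alarm region `Xa`, horizon `T ≥ 1`, transition pmf `P`,
running rewards `r` and terminal reward `rT`. -/
structure MDP (X A : Type) [Fintype X] [Fintype A] where
  T : ℕ
  hT : 1 ≤ T
  P : X → A → X → ℝ
  P_nonneg : ∀ x a x', 0 ≤ P x a x'
  P_sum : ∀ x a, ∑ x', P x a x' = 1
  r : Fin T → X → A → ℝ
  rT : X → ℝ
  Xa : Set X

variable {X A : Type} [Fintype X] [Fintype A]

/-- A trajectory `(x₀,…,x_T, a₀,…,a_{T-1})`. -/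
abbrev Traj (M : MDP X A) := (Fin (M.T + 1) → X) × (Fin M.T → A)

/-- A history-dependent randomized policy: at each time `t < T` it maps the
history `(x₀,…,x_t, a₀,…,a_{t-1})` to a pmf on actions. -/
structure HistPolicy (M : MDP X A) where
  π : (t : Fin M.T) → (Fin (t.val + 1) → X) → (Fin t.val → A) → A → ℝ
  nonneg : ∀ t xs as a, 0 ≤ π t xs as a
  sum_one : ∀ t xs as, ∑ a, π t xs as a = 1

/-- A policy is Markov if at each time it depends only on the current state. -/
def IsMarkov {M : MDP X A} (p : HistPolicy M) : Prop :=
  ∀ (t : Fin M.T) (xs xs' : Fin (t.val + 1) → X) (as as' : Fin t.val → A),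
    xs (Fin.last t.val) = xs' (Fin.last t.val) → p.π t xs as = p.π t xs' as'

/-- The state part of the history at time `t` determined by a trajectory. -/
def histStates {M : MDP X A} (τ : Traj M) (t : Fin M.T) : Fin (t.val + 1) → X :=
  fun i => τ.1 (Fin.castLE (by have := t.isLt; omega) i)

/-- The action part of the history at time `t` determined by a trajectory. -/
def histActs {M : MDP X A} (τ : Traj M) (t : Fin M.T) : Fin t.val → A :=
  fun i => τ.2 (Fin.castLE (by have := t.isLt; omega) i)

/-- The probability mass of a trajectory under policy `p` with initial state `x0`. -/
def trajProb (M : MDP X A) (p : HistPolicy M) (x0 : X) (τ : Traj M) : ℝ :=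
  (if τ.1 0 = x0 then (1 : ℝ) else 0) *
    ∏ t : Fin M.T,
      p.π t (histStates τ t) (histActs τ t) (τ.2 t) *
        M.P (τ.1 t.castSucc) (τ.2 t) (τ.1 t.succ)

/-- Probability of an event (a set of trajectories) under the trajectory law. -/
def probEvent (M : MDP X A) (p : HistPolicy M) (x0 : X) (E : Traj M → Prop) : ℝ :=
  ∑ τ : Traj M, if E τ then trajProb M p x0 τ else 0

/-- The objective `J_M(π) = E[Σ_t r_t(X_t,A_t) + r_T(X_T)]`. -/
def J (M : MDP X A) (p : HistPolicy M) (x0 : X) : ℝ :=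
  ∑ τ : Traj M, trajProb M p x0 τ *
    (∑ t : Fin M.T, M.r t (τ.1 t.castSucc) (τ.2 t) + M.rT (τ.1 (Fin.last M.T)))

/-- The binary augmented MDP: the extra `Bool` state records whether an alarm
has been triggered so far. -/
def binAug (M : MDP X A) : MDP (X × Bool) A where
  T := M.T
  hT := M.hT
  P := fun s a s' =>
    if s'.2 = (s.2 || decide (s'.1 ∈ M.Xa)) then M.P s.1 a s'.1 else 0
  P_nonneg := by
    intro s a s'
    try dsimp only
    split
    · exact M.P_nonneg s.1 a s'.1
    · exact le_refl 0
  P_sum := by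
    intro s a
    rw [Fintype.sum_prod_type]
    have h : ∀ x' : X,
        (∑ y : Bool, if y = (s.2 || decide (x' ∈ M.Xa)) then M.P s.1 a x' else 0)
          = M.P s.1 a x' := by
      intro x'; simp
    rw [Finset.sum_congr rfl fun x' _ => h x']
    exact M.P_sum s.1 a
  r := fun t s a => M.r t s.1 a
  rT := fun s => M.rT s.1
  Xa := {s | s.1 ∈ M.Xa}

/-- The alarm flag determined by a state history: `true` iff some state at a
positive time index so far lies in the alarm region. -/
def mdpFlag (M : MDP X A) {n : ℕ} (xs : Fin (n + 1) → X) (i : Fin (n + 1)) : Bool :=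
  decide (∃ k : ℕ, 0 < k ∧ k ≤ i.val ∧ ∃ h : k < n + 1, xs ⟨k, h⟩ ∈ M.Xa)

lemma mdpFlag_zero (M : MDP X A) {n : ℕ} (xs : Fin (n + 1) → X) :
    mdpFlag M xs 0 = false := by
  simp only [mdpFlag, decide_eq_false_iff_not]
  rintro ⟨k, hk0, hk, -⟩
  simp at hk
  omega

lemma mdpFlag_succ (M : MDP X A) {n : ℕ} (xs : Fin (n + 1) → X) (k : ℕ)
    (h : k + 1 < n + 1) :
    mdpFlag M xs ⟨k + 1, h⟩ =
      (mdpFlag M xs ⟨k, by omega⟩ || decide (xs ⟨k + 1, h⟩ ∈ M.Xa)) := by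
  have hor : ∀ p q : Prop, decide (p ∨ q) = (decide p || decide q) := by
    intro p q
    by_cases hp : p <;> by_cases hq : q <;> simp [hp, hq]
  simp only [mdpFlag, ← hor, decide_eq_decide]
  constructor
  · rintro ⟨j, hj0, hj, hjn, hmem⟩
    rcases Nat.lt_or_ge j (k + 1) with hlt | hge
    · exact Or.inl ⟨j, hj0, by omega, hjn, hmem⟩
    · have : j = k + 1 := by omega
      subst this
      exact Or.inr hmem
  · rintro (⟨j, hj0, hj, hjn, hmem⟩ | hmem)
    · exact ⟨j, hj0, by omega, hjn, hmem⟩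
    · exact ⟨k + 1, by omega, le_rfl, h, hmem⟩

lemma mdpFlag_restrict (M : MDP X A) {n m : ℕ} (xs : Fin (n + 1) → X)
    (hm : m + 1 ≤ n + 1) (i : Fin (m + 1)) :
    mdpFlag M (fun j => xs (Fin.castLE hm j)) i = mdpFlag M xs (Fin.castLE hm i) := by
  simp only [mdpFlag, decide_eq_decide]
  constructor
  · rintro ⟨k, hk0, hk, hkm, hmem⟩
    exact ⟨k, hk0, hk, by omega, hmem⟩
  · rintro ⟨k, hk0, hk, hkn, hmem⟩
    have hkm : k < m + 1 := by
      have := (Fin.castLE hm i).isLt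
      have hi := i.isLt
      simp [Fin.castLE] at hk
      omega
    refine ⟨k, hk0, by simpa [Fin.castLE] using hk, hkm, ?_⟩
    exact hmem

/-- The imitating policy: feed the deterministically reconstructed flag into `q`. -/
def liftPolicy (M : MDP X A) (q : HistPolicy (binAug M)) : HistPolicy M where
  π := fun t xs as a => q.π t (fun i => (xs i, mdpFlag M xs i)) as a
  nonneg := fun t xs as a => q.nonneg t _ as a
  sum_one := fun t xs as => q.sum_one t _ as

/-- Any policy of the binary augmented MDP can be imitated by a
policy of the original MDP: the pushforward of the augmented trajectory law
under the projection forgetting the flag equals the original trajectory law. -/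
theorem binAug_pushforward [Nonempty X] [Nonempty A]
    (M : MDP X A) (x0 : X) (q : HistPolicy (binAug M)) :
    ∃ p : HistPolicy M, ∀ τ : Traj M,
      trajProb M p x0 τ =
        ∑ σ : Traj (binAug M),
          if ((fun t => (σ.1 t).1, σ.2) : Traj M) = τ
          then trajProb (binAug M) q (x0, false) σ else 0 := by
  refine ⟨liftPolicy M q, fun τ => ?_⟩
  set σ₀ : Traj (binAug M) := (fun i => (τ.1 i, mdpFlag M τ.1 i), τ.2) with hσ₀
  have hproj₀ : ((fun t => (σ₀.1 t).1, σ₀.2) : Traj M) = τ := rfl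
  rw [Finset.sum_eq_single_of_mem σ₀ (Finset.mem_univ σ₀)]
  · rw [if_pos hproj₀]
    -- trajProb M (liftPolicy M q) x0 τ = trajProb (binAug M) q (x0, false) σ₀
    unfold trajProb
    congr 1
    · -- indicators agree
      have : (σ₀.1 0 = ((x0 : X), false)) ↔ (τ.1 0 = x0) := by
        constructor
        · intro h
          exact congrArg Prod.fst h
        · intro h
          have hf : mdpFlag M τ.1 0 = false := mdpFlag_zero M τ.1
          simp [hσ₀, h, hf]
          exact ⟨h, hf⟩
      by_cases h : τ.1 0 = x0
      · rw [if_pos h, if_pos (this.mpr h)]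
      · rw [if_neg h, if_neg (fun hh => h (this.mp hh))]
    · -- products agree factorwise
      refine Finset.prod_congr rfl fun t _ => ?_
      have hmle : t.val + 1 ≤ M.T + 1 := by have := t.isLt; omega
      have hhist : histStates σ₀ t =
          fun i => (histStates τ t i, mdpFlag M (histStates τ t) i) := by
        funext i
        show (τ.1 (Fin.castLE _ i), mdpFlag M τ.1 (Fin.castLE _ i)) = _
        have := mdpFlag_restrict M τ.1 hmle i
        unfold histStates
        rw [← this]
      have hpol : (liftPolicy M q).π t (histStates τ t) (histActs τ t) (τ.2 t)
          = q.π t (histStates σ₀ t) (histActs σ₀ t) (σ₀.2 t) := by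
        rw [hhist]; rfl
      have htrans : (binAug M).P (σ₀.1 t.castSucc) (σ₀.2 t) (σ₀.1 t.succ)
          = M.P (τ.1 t.castSucc) (τ.2 t) (τ.1 t.succ) := by
        show (if (mdpFlag M τ.1 t.succ) =
            ((mdpFlag M τ.1 t.castSucc) || decide ((τ.1 t.succ) ∈ M.Xa))
            then M.P (τ.1 t.castSucc) (τ.2 t) (τ.1 t.succ) else 0) = _
        rw [if_pos]
        have hsucc : t.succ = (⟨t.val + 1, by have := t.isLt; omega⟩ : Fin (M.T + 1)) :=
          rfl
        have hcast : t.castSucc = (⟨t.val, by have := t.isLt; omega⟩ : Fin (M.T + 1)) :=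
          rfl
        rw [hsucc, hcast]
        exact mdpFlag_succ M τ.1 t.val _
      rw [hpol]; exact congrArg _ htrans.symm
  · -- all other trajectories contribute 0
    intro σ _ hne
    by_cases hproj : ((fun t => (σ.1 t).1, σ.2) : Traj M) = τ
    · rw [if_pos hproj]
      have h1 : ∀ i, (σ.1 i).1 = τ.1 i := fun i =>
        congrFun (congrArg Prod.fst hproj) i
      have h2 : σ.2 = τ.2 := congrArg Prod.snd hproj
      -- there is a first time where the flag disagrees
      have hex : ∃ k : ℕ, ∃ h : k < M.T + 1,
          (σ.1 ⟨k, h⟩).2 ≠ mdpFlag M τ.1 ⟨k, h⟩ := by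
        by_contra hall
        push_neg at hall
        apply hne
        apply Prod.ext
        · funext i
          apply Prod.ext
          · exact h1 i
          · exact hall i.val i.isLt
        · exact h2
      set n := Nat.find hex with hn
      obtain ⟨hlt, hne2⟩ := Nat.find_spec hex
      have hmin : ∀ m (hm : m < M.T + 1), m < n →
          (σ.1 ⟨m, hm⟩).2 = mdpFlag M τ.1 ⟨m, hm⟩ := by
        intro m hm hmn
        by_contra hc
        exact Nat.find_min hex hmn ⟨hm, hc⟩
      rcases Nat.eq_zero_or_pos n with h0 | hpos
      · -- flag wrong at time 0 : initial indicator vanishes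
        have hzero : ((⟨n, hlt⟩ : Fin (M.T + 1))) = 0 := by
          apply Fin.ext; simp [h0]
        rw [hzero] at hne2
        have : σ.1 0 ≠ ((x0 : X), false) := by
          intro hcontra
          apply hne2
          exact (congrArg (fun s => s.2) ((congrArg σ.1 hzero).trans hcontra)).trans (mdpFlag_zero M τ.1).symm
        unfold trajProb
        rw [if_neg this, zero_mul]
      · -- flag first wrong at time k+1 : transition factor vanishes
        obtain ⟨k, hk⟩ : ∃ k, n = k + 1 := ⟨n - 1, by omega⟩
        have hkT : k < M.T := by omega
        set t : Fin M.T := ⟨k, hkT⟩ with ht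
        have hcs : t.castSucc = (⟨k, by omega⟩ : Fin (M.T + 1)) := rfl
        have hsc : t.succ = (⟨k + 1, by omega⟩ : Fin (M.T + 1)) := rfl
        have hfk : (σ.1 t.castSucc).2 = mdpFlag M τ.1 t.castSucc := by
          rw [hcs]; exact hmin k (by omega) (by omega)
        have hfk1 : (σ.1 t.succ).2 ≠ mdpFlag M τ.1 t.succ := by
          rw [hsc]
          have : (⟨n, hlt⟩ : Fin (M.T + 1)) = ⟨k + 1, by omega⟩ := by
            apply Fin.ext; simp [hk]
          rw [this] at hne2
          exact fun hc => hne2 ((congrArg (fun s => s.2) (congrArg σ.1 this)).trans hc)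
        have hflag : mdpFlag M τ.1 t.succ =
            (mdpFlag M τ.1 t.castSucc || decide (τ.1 t.succ ∈ M.Xa)) := by
          rw [hsc, hcs]
          exact mdpFlag_succ M τ.1 k _
        have hPzero : (binAug M).P (σ.1 t.castSucc) (σ.2 t) (σ.1 t.succ) = 0 := by
          show (if (σ.1 t.succ).2 =
              ((σ.1 t.castSucc).2 || decide ((σ.1 t.succ).1 ∈ M.Xa))
              then M.P (σ.1 t.castSucc).1 (σ.2 t) (σ.1 t.succ).1 else 0) = 0
          rw [if_neg]
          intro hcontra
          apply hfk1
          rw [hcontra, hfk, h1 t.succ, ← hflag]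
        have hterm : q.π t (histStates σ t) (histActs σ t) (σ.2 t) *
            (binAug M).P (σ.1 t.castSucc) (σ.2 t) (σ.1 t.succ) = 0 := by
          rw [hPzero, mul_zero]
        unfold trajProb
        exact mul_eq_zero_of_right _
          (Finset.prod_eq_zero (Finset.mem_univ t) hterm)
    · rw [if_neg hproj]

end
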